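/- Let 0 ≤ γ < 1, α = 4/(3+γ), C_α = (α³(α−1))^{−1/(3+γ)}, and C, R > 0 with R = (C/C_α)^{1/α}. Then the radial function ω(x) = C_α |x|^α on the ball B_R ⊂ ℝⁿ satisfies ω = C on ∂B_R, ω > 0 on B_R \ {0}, and at every x ≠ 0 where ω is twice differentiable, Δ_∞ ω(x) = ω(x)^{−γ}. -/

import Mathlib

open Metric

open Real
open scoped RealInnerProductSpace

lemma keyF {n : ℕ} (a b : ℝ) (y : EuclideanSpace ℝ (Fin n)) (hy : y ≠ 0) :
    HasFDerivAt (fun z : EuclideanSpace ℝ (Fin n) => b * ‖z‖ ^ a)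
      ((b * a * ‖y‖ ^ (a - 2)) • (innerSL ℝ y)) y := by
  have hr : (0:ℝ) < ‖y‖ := norm_pos_iff.2 hy
  have hq : HasFDerivAt (fun z : EuclideanSpace ℝ (Fin n) => ⟪z, z⟫)
      ((fderivInnerCLM ℝ (y, y)).comp ((ContinuousLinearMap.id ℝ _).prod
        (ContinuousLinearMap.id ℝ _))) y :=
    (hasFDerivAt_id y).inner ℝ (hasFDerivAt_id y)
  have hqy : ⟪y, y⟫ = ‖y‖ ^ (2:ℕ) := real_inner_self_eq_norm_sq y
  have hqy0 : ⟪y, y⟫ ≠ 0 := by rw [hqy]; positivity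
  have hφ : HasDerivAt (fun r : ℝ => b * r ^ (a/2))
      (b * (a/2 * ⟪y, y⟫ ^ (a/2 - 1))) ⟪y, y⟫ :=
    (Real.hasDerivAt_rpow_const (Or.inl hqy0)).const_mul b
  have hcomp := hφ.comp_hasFDerivAt (f := fun z : EuclideanSpace ℝ (Fin n) => ⟪z, z⟫) y hq
  have hfun : (fun z : EuclideanSpace ℝ (Fin n) => b * ‖z‖ ^ a)
      = (fun r : ℝ => b * r ^ (a/2)) ∘ (fun z => ⟪z, z⟫) := by
    funext z
    simp only [Function.comp_apply, real_inner_self_eq_norm_sq]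
    rw [← Real.rpow_natCast ‖z‖ 2, ← Real.rpow_mul (norm_nonneg z)]
    norm_num
    left; ring_nf
  rw [hfun]
  refine hcomp.congr_fderiv ?_
  ext h
  have h1 : ⟪y, y⟫ ^ (a/2 - 1) = ‖y‖ ^ (a - 2) := by
    rw [hqy, ← Real.rpow_natCast ‖y‖ 2, ← Real.rpow_mul (norm_nonneg y)]
    norm_num
    ring_nf
  simp only [ContinuousLinearMap.smul_apply, ContinuousLinearMap.coe_comp',
    Function.comp_apply, ContinuousLinearMap.prod_apply, ContinuousLinearMap.coe_id', id,
    fderivInnerCLM_apply, innerSL_apply_apply, smul_eq_mul, h1]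
  rw [real_inner_comm h y]
  ring

lemma keyG {n : ℕ} (a b : ℝ) (y : EuclideanSpace ℝ (Fin n)) (hy : y ≠ 0) :
    HasGradientAt (fun z : EuclideanSpace ℝ (Fin n) => b * ‖z‖ ^ a)
      ((b * a * ‖y‖ ^ (a - 2)) • y) y := by
  rw [hasGradientAt_iff_hasFDerivAt]
  refine (keyF a b y hy).congr_fderiv ?_
  ext h
  simp [real_inner_smul_left]

noncomputable def infLap {n : ℕ} (u : EuclideanSpace ℝ (Fin n) → ℝ)
    (x : EuclideanSpace ℝ (Fin n)) : ℝ :=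
  inner ℝ (fderiv ℝ (gradient u) x (gradient u x)) (gradient u x)

theorem stmt_15 {n : ℕ} (γ : ℝ) (hγ0 : 0 ≤ γ) (hγ1 : γ < 1) (α Cα C R : ℝ)
    (hα : α = 4 / (3 + γ)) (hCα : Cα = (α ^ 3 * (α - 1)) ^ (-(1 / (3 + γ)) : ℝ))
    (hC : 0 < C) (hR : 0 < R) (hRC : R = (C / Cα) ^ (1 / α))
    (ω : EuclideanSpace ℝ (Fin n) → ℝ) (hω : ∀ x, ω x = Cα * ‖x‖ ^ α) :
    (∀ x : EuclideanSpace ℝ (Fin n), ‖x‖ = R → ω x = C) ∧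
    (∀ x : EuclideanSpace ℝ (Fin n), x ≠ 0 → ‖x‖ < R → 0 < ω x) ∧
    (∀ x : EuclideanSpace ℝ (Fin n), x ≠ 0 → ContDiffAt ℝ 2 ω x →
      infLap ω x = ω x ^ (-γ)) := by
  have h3γ : (0:ℝ) < 3 + γ := by linarith
  have h3γ4 : (3:ℝ) + γ < 4 := by linarith
  have hα1 : 1 < α := by rw [hα]; rw [lt_div_iff₀ h3γ]; linarith
  have hα0 : 0 < α := by linarith
  have hK : (0:ℝ) < α ^ 3 * (α - 1) := mul_pos (pow_pos hα0 3) (by linarith)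
  have hCαpos : 0 < Cα := by rw [hCα]; exact Real.rpow_pos_of_pos hK _
  refine ⟨?_, ?_, ?_⟩
  · intro x hx
    rw [hω, hx, hRC, ← Real.rpow_mul (le_of_lt (div_pos hC hCαpos)),
      one_div_mul_cancel (ne_of_gt hα0), Real.rpow_one,
      mul_div_cancel₀ _ (ne_of_gt hCαpos)]
  · intro x hx _
    rw [hω]
    have : 0 < ‖x‖ := norm_pos_iff.2 hx
    positivity
  · intro x hx _
    have hr : (0:ℝ) < ‖x‖ := norm_pos_iff.2 hx
    have hωe : ω = fun z => Cα * ‖z‖ ^ α := funext hω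
    have grad : ∀ y : EuclideanSpace ℝ (Fin n), y ≠ 0 →
        gradient ω y = (Cα * α * ‖y‖ ^ (α - 2)) • y := by
      intro y hy
      rw [hωe]
      exact (keyG α Cα y hy).gradient
    set v : EuclideanSpace ℝ (Fin n) → EuclideanSpace ℝ (Fin n) :=
      fun y => (Cα * α * ‖y‖ ^ (α - 2)) • y with hvdef
    have hs : HasFDerivAt (fun y : EuclideanSpace ℝ (Fin n) => Cα * α * ‖y‖ ^ (α - 2))
        ((Cα * α * (α - 2) * ‖x‖ ^ (α - 2 - 2)) • innerSL ℝ x) x := by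
      exact keyF (α - 2) (Cα * α) x hx
    have hv : HasFDerivAt v
        ((Cα * α * ‖x‖ ^ (α - 2)) • ContinuousLinearMap.id ℝ _ +
          ((Cα * α * (α - 2) * ‖x‖ ^ (α - 2 - 2)) • innerSL ℝ x).smulRight x) x :=
      hs.smul (hasFDerivAt_id x)
    have hev : gradient ω =ᶠ[nhds x] v := by
      filter_upwards [IsOpen.mem_nhds isOpen_compl_singleton
        (Set.mem_compl_singleton_iff.2 hx)] with y hy
      exact grad y hy
    have hfd : fderiv ℝ (gradient ω) x = fderiv ℝ v x := hev.fderiv_eq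
    set c : ℝ := Cα * α * ‖x‖ ^ (α - 2) with hcdef
    set e : ℝ := Cα * α * (α - 2) * ‖x‖ ^ (α - 2 - 2) with hedef
    have hinfl : infLap ω x = c ^ 3 * ‖x‖ ^ (2:ℕ) + e * c ^ 2 * ‖x‖ ^ (2:ℕ) * ‖x‖ ^ (2:ℕ) := by
      unfold infLap
      rw [hfd, hv.fderiv, grad x hx]
      simp only [ContinuousLinearMap.add_apply, ContinuousLinearMap.smul_apply,
        ContinuousLinearMap.coe_id', id, ContinuousLinearMap.smulRight_apply,
        innerSL_apply_apply, real_inner_smul_left, real_inner_smul_right, inner_add_left,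
        real_inner_self_eq_norm_sq, smul_smul, smul_eq_mul]
      ring
    rw [hinfl, hω x]
    rw [Real.mul_rpow hCαpos.le (Real.rpow_pos_of_pos hr α).le,
      ← Real.rpow_mul hr.le]
    have hn2 : (‖x‖:ℝ) ^ (2:ℕ) = ‖x‖ ^ (2:ℝ) := (Real.rpow_natCast ‖x‖ 2).symm
    have hc3 : c ^ 3 = Cα ^ 3 * α ^ 3 * ‖x‖ ^ (3*(α-2)) := by
      rw [hcdef, show (3:ℝ)*(α-2) = (α-2)+((α-2)+(α-2)) by ring,
        Real.rpow_add hr, Real.rpow_add hr]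
      ring
    have hc2 : e * c ^ 2 = Cα ^ 3 * α ^ 3 * (α-2) * ‖x‖ ^ (3*α-8) := by
      rw [hcdef, hedef, show (3:ℝ)*α-8 = (α-2-2)+((α-2)+(α-2)) by ring,
        Real.rpow_add hr, Real.rpow_add hr]
      ring
    rw [hc3, hc2, hn2]
    have hp1 : ‖x‖ ^ (3*(α-2)) * ‖x‖ ^ (2:ℝ) = ‖x‖ ^ (3*α-4) := by
      rw [← Real.rpow_add hr]
      congr 1
      ring
    have hp2 : ‖x‖ ^ (3*α-8) * ‖x‖ ^ (2:ℝ) * ‖x‖ ^ (2:ℝ) = ‖x‖ ^ (3*α-4) := by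
      rw [← Real.rpow_add hr, ← Real.rpow_add hr]
      congr 1
      ring
    have hexp : α * (-γ) = 3*α - 4 := by
      have : α * (3 + γ) = 4 := by rw [hα]; field_simp
      linarith
    have hC3 : Cα ^ 3 * α ^ 3 * (α - 1) = Cα ^ (-γ : ℝ) := by
      have h1 : Cα ^ ((3:ℝ) + γ) = (α ^ 3 * (α - 1))⁻¹ := by
        rw [hCα, ← Real.rpow_mul hK.le,
          show -(1/(3+γ))*((3:ℝ)+γ) = -1 by field_simp]
        exact Real.rpow_neg_one _
      have h2 : Cα ^ (-γ : ℝ) * Cα ^ ((3:ℝ) + γ) = Cα ^ (3:ℕ) := by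
        rw [← Real.rpow_add hCαpos, ← Real.rpow_natCast Cα 3]
        norm_num
      have h3 : α ^ 3 * (α - 1) ≠ 0 := ne_of_gt hK
      rw [h1] at h2
      field_simp [ne_of_gt (sub_pos.2 hα1)] at h2
      linear_combination -h2
    rw [hexp]
    linear_combination (Cα^3*α^3) * hp1 + (Cα^3*α^3*(α-2)) * hp2 + ‖x‖ ^ (3*α-4) * hC3
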